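/- Let (λ_m)_{m≥1} be a nonincreasing summable sequence of nonnegative reals with ∑_{m=1}^∞ λ_m = 1 and finite entropy, i.e. the series ∑_{m=1}^∞ (−λ_m log λ_m) converges. For each d ≥ 1 define the block sums r^{(d)}_i := ∑_{l=1}^d λ_{i·d+l} for i ≥ 0. Then the coarse-grained entropy ∑_{i=0}^∞ (−r^{(d)}_i log r^{(d)}_i) tends to 0 as d → ∞. -/

import Mathlib

/-- Block sums `r^{(d)}_i = ∑_{l=1}^d λ_{i·d+l}` (0-indexed in `l`). -/
noncomputable def rMarginal (lam : ℕ → ℝ) (d i : ℕ) : ℝ := ∑ l ∈ Finset.range d, lam (i * d + l)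

/-- Subadditivity of entropy: `negMulLog` of a sum of nonnegatives is at most the sum
of `negMulLog`s. -/
lemma negMulLog_sum_le' {ι : Type*} (s : Finset ι) (x : ι → ℝ) (hx : ∀ l ∈ s, 0 ≤ x l) :
    Real.negMulLog (∑ l ∈ s, x l) ≤ ∑ l ∈ s, Real.negMulLog (x l) := by
  have h1 : Real.negMulLog (∑ l ∈ s, x l) = ∑ l ∈ s, -(x l * Real.log (∑ j ∈ s, x j)) := by
    simp only [Real.negMulLog, neg_mul, Finset.sum_neg_distrib, Finset.sum_mul]
  rw [h1]
  refine Finset.sum_le_sum fun l hl => ?_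
  rw [Real.negMulLog, neg_mul]
  rcases eq_or_lt_of_le (hx l hl) with h | h
  · simp [← h]
  · have hle : x l ≤ ∑ j ∈ s, x j := Finset.single_le_sum hx hl
    have := Real.log_le_log h hle
    nlinarith

/-- Concatenation of blocks. -/
lemma sum_blocks' (f : ℕ → ℝ) (n d : ℕ) :
    ∑ i ∈ Finset.range n, ∑ l ∈ Finset.range d, f (i * d + l)
      = ∑ m ∈ Finset.range (n * d), f m := by
  induction n with
  | zero => simp
  | succ n ih =>
    rw [Finset.sum_range_succ, ih, Nat.succ_mul, Finset.sum_range_add]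

theorem stmt5 (lam : ℕ → ℝ) (hanti : Antitone lam) (hnn : ∀ n, 0 ≤ lam n)
    (hsum : Summable lam) (h1 : ∑' n, lam n = 1)
    (hent : Summable fun n => Real.negMulLog (lam n)) :
    Filter.Tendsto (fun d : ℕ => ∑' i : ℕ, Real.negMulLog (rMarginal lam d i))
      Filter.atTop (nhds 0) := by
  set g : ℕ → ℝ := fun n => Real.negMulLog (lam n) with hg
  have hle1 : ∀ n, lam n ≤ 1 := by
    intro n
    calc lam n ≤ ∑' m, lam m := Summable.le_tsum hsum n fun m _ => hnn m
    _ = 1 := h1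
  have hg0 : ∀ n, 0 ≤ g n := fun n => Real.negMulLog_nonneg (hnn n) (hle1 n)
  have hr0 : ∀ d i, 0 ≤ rMarginal lam d i := fun d i => Finset.sum_nonneg fun l _ => hnn _
  have hr1 : ∀ d i, rMarginal lam d i ≤ 1 := by
    intro d i
    rw [← h1]
    have : rMarginal lam d i = ∑ m ∈ (Finset.range d).image (fun l => i * d + l), lam m := by
      rw [Finset.sum_image]
      · rfl
      · intro a _ b _ h; have h' : i * d + a = i * d + b := h; omega
    rw [this]
    exact Summable.sum_le_tsum _ (fun m _ => hnn m) hsum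
  have hh0 : ∀ d i, 0 ≤ Real.negMulLog (rMarginal lam d i) :=
    fun d i => Real.negMulLog_nonneg (hr0 d i) (hr1 d i)
  set G : ℕ → ℝ :=
    fun d => Real.negMulLog (∑ l ∈ Finset.range d, lam l) + ∑' m, g (m + d) with hG
  have hr00 : ∀ d, rMarginal lam d 0 = ∑ l ∈ Finset.range d, lam l := by
    intro d; unfold rMarginal; simp
  have hbound : ∀ d, (∑' i, Real.negMulLog (rMarginal lam d i)) ≤ G d := by
    intro d
    have htail : Summable fun m => g (m + d) := (summable_nat_add_iff d).mpr hent
    have hGnn : 0 ≤ G d := by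
      refine add_nonneg ?_ (tsum_nonneg fun m => hg0 _)
      rw [← hr00 d]; exact hh0 d 0
    refine tsum_le_of_sum_le' hGnn fun u => ?_
    obtain ⟨N, hN⟩ := u.exists_nat_subset_range
    have hsub : ∑ i ∈ u, Real.negMulLog (rMarginal lam d i)
        ≤ ∑ i ∈ Finset.range (N + 1), Real.negMulLog (rMarginal lam d i) :=
      Finset.sum_le_sum_of_subset_of_nonneg
        (hN.trans (Finset.range_subset_range.mpr (Nat.le_succ N))) (fun i _ _ => hh0 d i)
    rw [Finset.sum_range_succ'] at hsub
    have hstep : ∑ i ∈ Finset.range N, Real.negMulLog (rMarginal lam d (i + 1))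
        ≤ ∑' m, g (m + d) := by
      have h2 : ∀ i, Real.negMulLog (rMarginal lam d (i + 1))
          ≤ ∑ l ∈ Finset.range d, g ((i + 1) * d + l) :=
        fun i => negMulLog_sum_le' _ _ (fun l _ => hnn _)
      have hblock : ∑ i ∈ Finset.range N, ∑ l ∈ Finset.range d, g ((i + 1) * d + l)
          = ∑ m ∈ Finset.range (N * d), g (m + d) := by
        have hb := sum_blocks' (fun m => g (m + d)) N d
        rw [← hb]
        refine Finset.sum_congr rfl fun i _ => Finset.sum_congr rfl fun l _ => ?_
        congr 1
        ring
      calc ∑ i ∈ Finset.range N, Real.negMulLog (rMarginal lam d (i + 1))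
          ≤ ∑ i ∈ Finset.range N, ∑ l ∈ Finset.range d, g ((i + 1) * d + l) :=
            Finset.sum_le_sum fun i _ => h2 i
        _ = ∑ m ∈ Finset.range (N * d), g (m + d) := hblock
        _ ≤ ∑' m, g (m + d) := Summable.sum_le_tsum _ (fun m _ => hg0 _) htail
    calc ∑ i ∈ u, Real.negMulLog (rMarginal lam d i)
        ≤ ∑ i ∈ Finset.range N, Real.negMulLog (rMarginal lam d (i + 1))
          + Real.negMulLog (rMarginal lam d 0) := hsub
      _ ≤ ∑' m, g (m + d) + Real.negMulLog (∑ l ∈ Finset.range d, lam l) := by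
          rw [hr00 d]; exact add_le_add_left hstep _
      _ = G d := by rw [hG]; ring
  have hA : Filter.Tendsto (fun d => Real.negMulLog (∑ l ∈ Finset.range d, lam l))
      Filter.atTop (nhds 0) := by
    have h2 := hsum.hasSum.tendsto_sum_nat
    rw [h1] at h2
    have h3 := (Real.continuous_negMulLog.tendsto 1).comp h2
    simpa [Function.comp_def] using h3
  have hB : Filter.Tendsto (fun d => ∑' m, g (m + d)) Filter.atTop (nhds 0) :=
    tendsto_sum_nat_add g
  have hG0 : Filter.Tendsto G Filter.atTop (nhds 0) := by
    have := hA.add hB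
    simpa using this
  exact squeeze_zero (fun d => tsum_nonneg (hh0 d)) hbound hG0
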